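/- One-variable descent with Lipschitz step sizes (alternating-minimization step): let ε, α_T, β_T ≥ 0 and z, v ∈ ℂ^d. Define L_v = d·max_{j=1,…,d} Σ_{r∈R} |(S_r v)_j|² + α_T and L_z = d·max_{j=1,…,d} Σ_{r∈R} |(S_{−r} z)_j|² + β_T, and set z₊ = z − L_v^{−1}·∇_z J(z,v) and v₊ = v − L_z^{−1}·∇_v J(z,v). Then L_v ≤ d‖v‖₂² + α_T, L_z ≤ d‖z‖₂² + β_T, and J(z₊, v) ≤ J(z, v) − L_v^{−1}·‖∇_z J(z,v)‖₂² and J(z, v₊) ≤ J(z, v) − L_z^{−1}·‖∇_v J(z,v)‖₂². -/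

import Mathlib

open scoped BigOperators Classical
open Finset

noncomputable section

namespace Ptycho

/-- Entry of the discrete Fourier matrix: `F_{k,j} = exp(-2πi·k·j/d)`. -/
def Fent (d : ℕ) (k j : ZMod d) : ℂ :=
  Complex.exp (-(2 * (Real.pi : ℂ) * Complex.I * (k.val : ℂ) * (j.val : ℂ)) / (d : ℂ))

/-- `[F (z ∘ S_r v)]_k`, i.e. the bilinear form `z^T Q_{r,k} v`. -/
def Qform (d : ℕ) [NeZero d] (r k : ZMod d) (z v : ZMod d → ℂ) : ℂ :=
  ∑ j : ZMod d, z j * Fent d k j * v (j - r)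

/-- Noiseless ptychographic measurement `|[F (x ∘ S_r w)]_k|²`. -/
def meas (d : ℕ) [NeZero d] (r k : ZMod d) (x w : ZMod d → ℂ) : ℝ :=
  ‖Qform d r k x w‖ ^ 2

/-- Squared Euclidean norm `‖u‖₂²`. -/
def nsq (d : ℕ) [NeZero d] (u : ZMod d → ℂ) : ℝ :=
  ∑ j : ZMod d, ‖u j‖ ^ 2

/-- Single-shift amplitude-based loss
`L_{r,ε}(z,v) = Σ_k (√(|z^T Q_{r,k} v|² + ε) − √(y_{r,k} + ε))²`. -/
def lossR (d : ℕ) [NeZero d] (y : ZMod d → ZMod d → ℝ) (ε : ℝ) (r : ZMod d)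
    (z v : ZMod d → ℂ) : ℝ :=
  ∑ k : ZMod d,
    (Real.sqrt (‖Qform d r k z v‖ ^ 2 + ε) - Real.sqrt (y r k + ε)) ^ 2

/-- Amplitude-based loss `L_ε(z,v) = Σ_{r∈R} L_{r,ε}(z,v)`. -/
def loss (d : ℕ) [NeZero d] (R : Finset (ZMod d)) (y : ZMod d → ZMod d → ℝ) (ε : ℝ)
    (z v : ZMod d → ℂ) : ℝ :=
  ∑ r ∈ R, lossR d y ε r z v

/-- Coefficient `1 − √(y_{r,k}+ε)/√(|z^T Q_{r,k} v|²+ε)` appearing in the Wirtinger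
gradients. (Lean's convention `a/0 = 0` realizes the paper's convention, since the
coefficient is always multiplied by `z^T Q_{r,k} v`.) -/
def coef (ε yrk : ℝ) (c : ℂ) : ℝ :=
  1 - Real.sqrt (yrk + ε) / Real.sqrt (‖c‖ ^ 2 + ε)

/-- Wirtinger gradient `∇_z L_{r,ε}(z,v)`; note `(Q_{r,k} v)_j = F_{k,j}·v_{j−r}`. -/
def gradZr (d : ℕ) [NeZero d] (y : ZMod d → ZMod d → ℝ) (ε : ℝ) (r : ZMod d)
    (z v : ZMod d → ℂ) : ZMod d → ℂ := fun j =>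
  ∑ k : ZMod d, (coef ε (y r k) (Qform d r k z v) : ℂ) * Qform d r k z v *
    (starRingEnd ℂ) (Fent d k j * v (j - r))

/-- Wirtinger gradient `∇_v L_{r,ε}(z,v)`; note `(Q_{r,k}^T z)_j = F_{k,j+r}·z_{j+r}`. -/
def gradVr (d : ℕ) [NeZero d] (y : ZMod d → ZMod d → ℝ) (ε : ℝ) (r : ZMod d)
    (z v : ZMod d → ℂ) : ZMod d → ℂ := fun j =>
  ∑ k : ZMod d, (coef ε (y r k) (Qform d r k z v) : ℂ) * Qform d r k z v *
    (starRingEnd ℂ) (Fent d k (j + r) * z (j + r))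

/-- Regularized loss `J(z,v) = L_ε(z,v) + α_T‖z‖₂² + β_T‖v‖₂²`. -/
def Jfun (d : ℕ) [NeZero d] (R : Finset (ZMod d)) (y : ZMod d → ZMod d → ℝ)
    (ε αT βT : ℝ) (z v : ZMod d → ℂ) : ℝ :=
  loss d R y ε z v + αT * nsq d z + βT * nsq d v

/-- Wirtinger gradient `∇_z J(z,v) = ∇_z L_ε(z,v) + α_T z`. -/
def gradZJ (d : ℕ) [NeZero d] (R : Finset (ZMod d)) (y : ZMod d → ZMod d → ℝ)
    (ε αT : ℝ) (z v : ZMod d → ℂ) : ZMod d → ℂ := fun j =>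
  (∑ r ∈ R, gradZr d y ε r z v j) + (αT : ℂ) * z j

/-- Wirtinger gradient `∇_v J(z,v) = ∇_v L_ε(z,v) + β_T v`. -/
def gradVJ (d : ℕ) [NeZero d] (R : Finset (ZMod d)) (y : ZMod d → ZMod d → ℝ)
    (ε βT : ℝ) (z v : ZMod d → ℂ) : ZMod d → ℂ := fun j =>
  (∑ r ∈ R, gradVr d y ε r z v j) + (βT : ℂ) * v j

/-- `‖y/d‖₁ = (1/d)·Σ_{r∈R} Σ_k y_{r,k}`. -/
def yd1 (d : ℕ) [NeZero d] (R : Finset (ZMod d)) (y : ZMod d → ZMod d → ℝ) : ℝ :=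
  (∑ r ∈ R, ∑ k : ZMod d, y r k) / d

/-- Real part of the Hermitian inner product `Re(u* g)`. -/
def reInner (d : ℕ) [NeZero d] (u g : ZMod d → ℂ) : ℝ :=
  (∑ j : ZMod d, (starRingEnd ℂ) (u j) * g j).re

/-- `B(z,v) = 3d·((10/3)‖z‖₂² + (10/3)‖v‖₂² + ‖y/d‖₁^{1/2}) + 3·max{α_T, β_T}`. -/
def Bfun (d : ℕ) [NeZero d] (R : Finset (ZMod d)) (y : ZMod d → ZMod d → ℝ)
    (αT βT : ℝ) (z v : ZMod d → ℂ) : ℝ :=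
  3 * d * ((10 / 3) * nsq d z + (10 / 3) * nsq d v + Real.sqrt (yd1 d R y)) +
    3 * max αT βT

/-- `L_v = d·max_j Σ_{r∈R} |(S_r v)_j|² + α_T` with `(S_r v)_j = v_{j−r}`. -/
def Lv (d : ℕ) [NeZero d] (R : Finset (ZMod d)) (αT : ℝ) (v : ZMod d → ℂ) : ℝ :=
  d * (Finset.univ.sup' ⟨(0 : ZMod d), Finset.mem_univ 0⟩
    fun j => ∑ r ∈ R, ‖v (j - r)‖ ^ 2) + αT

/-- `L_z = d·max_j Σ_{r∈R} |(S_{−r} z)_j|² + β_T` with `(S_{−r} z)_j = z_{j+r}`. -/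
def Lz (d : ℕ) [NeZero d] (R : Finset (ZMod d)) (βT : ℝ) (z : ZMod d → ℂ) : ℝ :=
  d * (Finset.univ.sup' ⟨(0 : ZMod d), Finset.mem_univ 0⟩
    fun j => ∑ r ∈ R, ‖z (j + r)‖ ^ 2) + βT

lemma Fent_orth (d : ℕ) [NeZero d] (j j' : ZMod d) :
    ∑ k : ZMod d, Fent d k j * (starRingEnd ℂ) (Fent d k j') =
      if j = j' then (d : ℂ) else 0 := by
  have hd : (d : ℕ) ≠ 0 := NeZero.ne d
  have hdc : ((d : ℕ) : ℂ) ≠ 0 := Nat.cast_ne_zero.mpr hd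
  set ω : ℂ := Complex.exp (2 * Real.pi * Complex.I / d) with hω
  have hprim : IsPrimitiveRoot ω d := Complex.isPrimitiveRoot_exp d hd
  set m : ℤ := (j'.val : ℤ) - (j.val : ℤ) with hm
  set ξ : ℂ := ω ^ m with hξ
  have hterm : ∀ k : ZMod d, Fent d k j * (starRingEnd ℂ) (Fent d k j') = ξ ^ (k.val) := by
    intro k
    have h1 : Fent d k j * (starRingEnd ℂ) (Fent d k j')
        = Complex.exp ((k.val : ℂ) * ((m : ℂ) * (2 * Real.pi * Complex.I / d))) := by
      unfold Fent
      rw [← Complex.exp_conj, ← Complex.exp_add]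
      congr 1
      simp only [map_div₀, map_neg, map_mul, Complex.conj_I, Complex.conj_ofReal,
        map_natCast, map_ofNat]
      rw [hm]
      push_cast
      field_simp
      ring
    rw [h1,
      show ((k.val : ℂ) * ((m : ℂ) * (2 * Real.pi * Complex.I / d)))
        = (m : ℂ) * (((k.val : ℕ) : ℂ) * (2 * Real.pi * Complex.I / d)) from by push_cast; ring,
      Complex.exp_int_mul, Complex.exp_nat_mul, ← hω, hξ]
    rw [← zpow_natCast ω k.val, ← zpow_mul, mul_comm, zpow_mul, zpow_natCast]
  rw [Finset.sum_congr rfl fun k _ => hterm k]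
  have hsum : ∑ k : ZMod d, ξ ^ (k.val) = ∑ n ∈ Finset.range d, ξ ^ n := by
    refine Finset.sum_nbij' (fun k => k.val) (fun n => ((n : ℕ) : ZMod d)) ?_ ?_ ?_ ?_ ?_
    · intro k _; exact Finset.mem_range.mpr (ZMod.val_lt k)
    · intro n _; exact Finset.mem_univ _
    · intro k _; exact ZMod.natCast_rightInverse k
    · intro n hn; exact ZMod.val_cast_of_lt (Finset.mem_range.mp hn)
    · intro k _; rfl
  rw [hsum]
  by_cases h : j = j'
  · subst h
    simp [hξ, hm]
  · rw [if_neg h]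
    have hmne : m ≠ 0 := by
      rw [hm, sub_ne_zero]
      intro he
      exact h (ZMod.val_injective d (by exact_mod_cast he.symm))
    have hξne : ξ ≠ 1 := by
      rw [hξ]
      intro hcon
      have hdvd := (hprim.zpow_eq_one_iff_dvd m).mp hcon
      have h1 : m < (d : ℤ) := by have := j'.val_lt; omega
      have h2 : -(d : ℤ) < m := by have := j.val_lt; omega
      have habs : |m| < (d : ℤ) := abs_lt.mpr ⟨h2, h1⟩
      have hle : (d : ℤ) ≤ |m| := Int.le_of_dvd (abs_pos.mpr hmne) ((dvd_abs (d:ℤ) m).mpr hdvd)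
      linarith
    have hxid : ξ ^ d = 1 := by
      rw [hξ, ← zpow_natCast (ω ^ m) d, ← zpow_mul, mul_comm, zpow_mul, zpow_natCast,
        hprim.pow_eq_one, one_zpow]
    rw [geom_sum_eq hξne, hxid, sub_self, zero_div]

lemma parseval (d : ℕ) [NeZero d] (u : ZMod d → ℂ) :
    ∑ k : ZMod d, ‖∑ j : ZMod d, Fent d k j * u j‖ ^ 2
      = d * ∑ j : ZMod d, ‖u j‖ ^ 2 := by
  have key : ((∑ k : ZMod d, ‖∑ j : ZMod d, Fent d k j * u j‖ ^ 2 : ℝ) : ℂ)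
      = ((d : ℝ) * ∑ j : ZMod d, ‖u j‖ ^ 2 : ℝ) := by
    push_cast
    calc (∑ k : ZMod d, ((‖∑ j : ZMod d, Fent d k j * u j‖ : ℝ) : ℂ) ^ 2)
        = ∑ k : ZMod d, (∑ j : ZMod d, Fent d k j * u j) *
            (starRingEnd ℂ) (∑ j : ZMod d, Fent d k j * u j) := by
          refine Finset.sum_congr rfl fun k _ => ?_
          rw [Complex.mul_conj]
          norm_cast
          exact Complex.sq_norm _
      _ = ∑ k : ZMod d, ∑ j : ZMod d, ∑ j' : ZMod d,
            (u j * (starRingEnd ℂ) (u j')) * (Fent d k j * (starRingEnd ℂ) (Fent d k j')) := by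
          refine Finset.sum_congr rfl fun k _ => ?_
          rw [map_sum, Finset.sum_mul_sum]
          refine Finset.sum_congr rfl fun j _ => Finset.sum_congr rfl fun j' _ => ?_
          rw [map_mul]; ring
      _ = ∑ j : ZMod d, ∑ j' : ZMod d,
            (u j * (starRingEnd ℂ) (u j')) * ∑ k : ZMod d, (Fent d k j * (starRingEnd ℂ) (Fent d k j')) := by
          rw [Finset.sum_comm]
          refine Finset.sum_congr rfl fun j _ => ?_
          rw [Finset.sum_comm]
          refine Finset.sum_congr rfl fun j' _ => ?_
          rw [Finset.mul_sum]
      _ = ∑ j : ZMod d, (u j * (starRingEnd ℂ) (u j)) * (d : ℂ) := by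
          refine Finset.sum_congr rfl fun j _ => ?_
          rw [Finset.sum_eq_single j]
          · rw [Fent_orth, if_pos rfl]
          · intro j' _ hne
            rw [Fent_orth, if_neg (Ne.symm hne), mul_zero]
          · intro hj; exact absurd (Finset.mem_univ j) hj
      _ = (d : ℂ) * ∑ j : ZMod d, ((‖u j‖ : ℝ) : ℂ) ^ 2 := by
          rw [Finset.mul_sum]
          refine Finset.sum_congr rfl fun j _ => ?_
          rw [Complex.mul_conj, mul_comm]
          norm_cast
          rw [Complex.sq_norm]
  exact_mod_cast key

lemma cs_aux (ε : ℝ) (hε : 0 ≤ ε) (w w' : ℂ) :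
    (w * (starRingEnd ℂ) w').re + ε ≤
      Real.sqrt (‖w‖ ^ 2 + ε) * Real.sqrt (‖w'‖ ^ 2 + ε) := by
  have h1 : (w * (starRingEnd ℂ) w').re ≤ ‖w‖ * ‖w'‖ := by
    calc (w * (starRingEnd ℂ) w').re ≤ ‖w * (starRingEnd ℂ) w'‖ :=
          Complex.re_le_norm _
      _ = ‖w‖ * ‖w'‖ := by rw [norm_mul, Complex.norm_conj]
  have h2 : ‖w‖ * ‖w'‖ + ε ≤
      Real.sqrt (‖w‖ ^ 2 + ε) * Real.sqrt (‖w'‖ ^ 2 + ε) := by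
    rw [← Real.sqrt_mul (by positivity)]
    rw [Real.le_sqrt (by positivity) (by positivity)]
    nlinarith [sq_nonneg (‖w‖ - ‖w'‖), norm_nonneg w,
      norm_nonneg w']
  linarith

lemma amp_ineq (ε Y : ℝ) (hε : 0 ≤ ε) (hY : 0 ≤ Y) (w w' : ℂ) :
    (Real.sqrt (‖w'‖ ^ 2 + ε) - Real.sqrt (Y + ε)) ^ 2 ≤
      (Real.sqrt (‖w‖ ^ 2 + ε) - Real.sqrt (Y + ε)) ^ 2
        + 2 * (((coef ε Y w : ℝ) : ℂ) * w * (starRingEnd ℂ) (w' - w)).re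
        + ‖w' - w‖ ^ 2 := by
  set a := ‖w‖ with ha
  set b := ‖w'‖ with hb
  set t : ℝ := (w * (starRingEnd ℂ) (w' - w)).re with ht
  set s := Real.sqrt (a ^ 2 + ε) with hs
  set q := Real.sqrt (Y + ε) with hq
  set SB := Real.sqrt (b ^ 2 + ε) with hSB
  have hs0 : 0 ≤ s := Real.sqrt_nonneg _
  have hq0 : 0 ≤ q := Real.sqrt_nonneg _
  have hSB0 : 0 ≤ SB := Real.sqrt_nonneg _
  have hs2 : s ^ 2 = a ^ 2 + ε := Real.sq_sqrt (by positivity)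
  have hq2 : q ^ 2 = Y + ε := Real.sq_sqrt (by positivity)
  have hSB2 : SB ^ 2 = b ^ 2 + ε := Real.sq_sqrt (by positivity)
  -- expansion of |w'|^2
  have hb2 : b ^ 2 = a ^ 2 + 2 * t + ‖w' - w‖ ^ 2 := by
    have hw' : w' = w + (w' - w) := by ring
    rw [hb, hw', ht]
    rw [Complex.sq_norm, Complex.sq_norm, Complex.sq_norm, Complex.normSq_add]
    ring
  -- the re-term
  have hre : (((coef ε Y w : ℝ) : ℂ) * w * (starRingEnd ℂ) (w' - w)).re
      = (1 - q / s) * t := by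
    rw [show ((coef ε Y w : ℝ) : ℂ) * w * (starRingEnd ℂ) (w' - w)
        = ((coef ε Y w : ℝ) : ℂ) * (w * (starRingEnd ℂ) (w' - w)) from by ring]
    rw [Complex.re_ofReal_mul, ht]
    congr 1
  -- key concavity inequality
  have key : q * s + q / s * t ≤ q * SB := by
    rcases eq_or_lt_of_le hq0 with hq' | hq'
    · rw [← hq']; simp
    · have h2 : s + t / s ≤ SB := by
        rcases eq_or_lt_of_le hs0 with hs' | hs'
        · rw [← hs']; simp [hSB0]
        · have hcs : t + (a ^ 2 + ε) ≤ s * SB := by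
            have := cs_aux ε hε w w'
            have htw : t = (w * (starRingEnd ℂ) w').re - a ^ 2 := by
              rw [ht, map_sub, mul_sub]
              rw [Complex.sub_re]
              have : (w * (starRingEnd ℂ) w).re = a ^ 2 := by
                rw [Complex.mul_conj, ha, Complex.sq_norm]
                simp
              rw [this]
            rw [htw, hs, hSB, ha, hb]
            linarith
          rw [show s + t / s = (s ^ 2 + t) / s from by field_simp]
          rw [div_le_iff₀ hs']
          rw [hs2]
          linarith [hcs]
      calc q * s + q / s * t = q * (s + t / s) := by field_simp
        _ ≤ q * SB := by nlinarith
  -- final assembly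
  have hLHS : (SB - q) ^ 2 = b ^ 2 + (Y + ε) - 2 * q * SB + ε := by nlinarith [hSB2, hq2]
  have hRHS : (s - q) ^ 2 = a ^ 2 + (Y + ε) - 2 * q * s + ε := by nlinarith [hs2, hq2]
  rw [hre]
  have hexp : 2 * ((1 - q / s) * t) = 2 * t - 2 * (q / s * t) := by ring
  linarith [key, hb2, hLHS, hRHS, hexp]

lemma nsq_nonneg (d : ℕ) [NeZero d] (u : ZMod d → ℂ) : 0 ≤ nsq d u := by
  unfold nsq; positivity

lemma descent_core (d : ℕ) [NeZero d] (A : Finset (ZMod d × ZMod d))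
    (c : ZMod d × ZMod d → ZMod d → ℂ) (Y : ZMod d × ZMod d → ℝ)
    (hY : ∀ a ∈ A, 0 ≤ Y a) (ε α L : ℝ) (hε : 0 ≤ ε) (hL0 : 0 ≤ L)
    (hL : ∀ h : ZMod d → ℂ,
      (∑ a ∈ A, ‖∑ j : ZMod d, c a j * h j‖ ^ 2) + α * nsq d h ≤ L * nsq d h)
    (x g : ZMod d → ℂ)
    (hg : ∀ j, g j = (∑ a ∈ A, ((coef ε (Y a) (∑ i : ZMod d, c a i * x i) : ℝ) : ℂ) *
        (∑ i : ZMod d, c a i * x i) * (starRingEnd ℂ) (c a j)) + (α : ℂ) * x j) :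
    (∑ a ∈ A, (Real.sqrt (‖∑ j : ZMod d, c a j * (x j - (L⁻¹ : ℂ) * g j)‖ ^ 2 + ε)
        - Real.sqrt (Y a + ε)) ^ 2) + α * nsq d (fun j => x j - (L⁻¹ : ℂ) * g j)
    ≤ (∑ a ∈ A, (Real.sqrt (‖∑ j : ZMod d, c a j * x j‖ ^ 2 + ε)
        - Real.sqrt (Y a + ε)) ^ 2) + α * nsq d x - L⁻¹ * nsq d g := by
  set h : ZMod d → ℂ := fun j => -((L⁻¹ : ℝ) : ℂ) * g j with hh
  have hxh : ∀ j, x j - (L⁻¹ : ℂ) * g j = x j + h j := by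
    intro j; rw [hh]; push_cast; ring
  -- linearity of W
  have hWadd : ∀ a : ZMod d × ZMod d,
      (∑ j : ZMod d, c a j * (x j + h j))
        = (∑ j : ZMod d, c a j * x j) + (∑ j : ZMod d, c a j * h j) := by
    intro a
    rw [← Finset.sum_add_distrib]
    exact Finset.sum_congr rfl fun j _ => by ring
  -- per-term inequality
  have step1 : ∀ a ∈ A,
      (Real.sqrt (‖∑ j : ZMod d, c a j * (x j + h j)‖ ^ 2 + ε)
        - Real.sqrt (Y a + ε)) ^ 2
      ≤ (Real.sqrt (‖∑ j : ZMod d, c a j * x j‖ ^ 2 + ε)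
            - Real.sqrt (Y a + ε)) ^ 2
        + 2 * (((coef ε (Y a) (∑ i : ZMod d, c a i * x i) : ℝ) : ℂ) *
            (∑ i : ZMod d, c a i * x i) * (starRingEnd ℂ) (∑ j : ZMod d, c a j * h j)).re
        + ‖∑ j : ZMod d, c a j * h j‖ ^ 2 := by
    intro a ha
    have := amp_ineq ε (Y a) hε (hY a ha)
      (∑ i : ZMod d, c a i * x i)
      ((∑ i : ZMod d, c a i * x i) + (∑ j : ZMod d, c a j * h j))
    rw [add_sub_cancel_left] at this
    rw [hWadd a]
    exact this
  have step1s := Finset.sum_le_sum step1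
  have inner_sum : ∀ (X : ℂ) (a : ZMod d × ZMod d),
      ∑ j : ZMod d, (starRingEnd ℂ) (h j) * (X * (starRingEnd ℂ) (c a j))
        = X * (starRingEnd ℂ) (∑ j : ZMod d, c a j * h j) := by
    intro X a
    rw [map_sum, Finset.mul_sum]
    exact Finset.sum_congr rfl fun j _ => by simp only [map_mul, map_neg]; ring
  -- gradient inner product identity (complex form)
  have hG : ∑ j : ZMod d, (starRingEnd ℂ) (h j) * g j
      = (∑ a ∈ A, ((coef ε (Y a) (∑ i : ZMod d, c a i * x i) : ℝ) : ℂ) *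
          (∑ i : ZMod d, c a i * x i) * (starRingEnd ℂ) (∑ j : ZMod d, c a j * h j))
        + (α : ℂ) * ∑ j : ZMod d, (starRingEnd ℂ) (h j) * x j := by
    calc ∑ j : ZMod d, (starRingEnd ℂ) (h j) * g j
        = ∑ j : ZMod d, ((∑ a ∈ A, (starRingEnd ℂ) (h j) *
            (((coef ε (Y a) (∑ i : ZMod d, c a i * x i) : ℝ) : ℂ) *
              (∑ i : ZMod d, c a i * x i) * (starRingEnd ℂ) (c a j)))
          + (α : ℂ) * ((starRingEnd ℂ) (h j) * x j)) := by
          refine Finset.sum_congr rfl fun j _ => ?_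
          rw [hg j, mul_add, Finset.mul_sum, mul_left_comm ((starRingEnd ℂ) (h j)) ((α : ℂ)) (x j)]
      _ = (∑ j : ZMod d, ∑ a ∈ A, (starRingEnd ℂ) (h j) *
            (((coef ε (Y a) (∑ i : ZMod d, c a i * x i) : ℝ) : ℂ) *
              (∑ i : ZMod d, c a i * x i) * (starRingEnd ℂ) (c a j)))
          + (α : ℂ) * ∑ j : ZMod d, (starRingEnd ℂ) (h j) * x j := by
          rw [Finset.sum_add_distrib, Finset.mul_sum]
      _ = (∑ a ∈ A, ((coef ε (Y a) (∑ i : ZMod d, c a i * x i) : ℝ) : ℂ) *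
            (∑ i : ZMod d, c a i * x i) * (starRingEnd ℂ) (∑ j : ZMod d, c a j * h j))
          + (α : ℂ) * ∑ j : ZMod d, (starRingEnd ℂ) (h j) * x j := by
          congr 1
          rw [Finset.sum_comm]
          refine Finset.sum_congr rfl fun a _ => ?_
          exact inner_sum _ a
  -- value of the inner product
  have hGval : ∑ j : ZMod d, (starRingEnd ℂ) (h j) * g j
      = ((-(L⁻¹ * nsq d g) : ℝ) : ℂ) := by
    have : ∀ j : ZMod d, (starRingEnd ℂ) (h j) * g j
        = -((L⁻¹ : ℝ) : ℂ) * ((‖g j‖ ^ 2 : ℝ) : ℂ) := by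
      intro j
      rw [hh]
      simp only [map_mul, map_neg, Complex.conj_ofReal]
      rw [mul_assoc, ← Complex.normSq_eq_conj_mul_self]
      norm_cast
      rw [Complex.sq_norm]
    rw [Finset.sum_congr rfl fun j _ => this j, ← Finset.mul_sum]
    unfold nsq
    push_cast
    ring
  -- nsq of h
  have hnsqh : nsq d h = L⁻¹ ^ 2 * nsq d g := by
    unfold nsq
    rw [Finset.mul_sum]
    refine Finset.sum_congr rfl fun j _ => ?_
    rw [hh]
    simp only [norm_mul, map_neg]
    rw [mul_pow, show ‖-((L⁻¹ : ℝ) : ℂ)‖ = |L⁻¹| from by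
      rw [norm_neg, Complex.norm_real, Real.norm_eq_abs], sq_abs]
  -- nsq of x + h
  have hnsqadd : nsq d (fun j => x j + h j)
      = nsq d x + 2 * (∑ j : ZMod d, ((starRingEnd ℂ) (h j) * x j).re) + nsq d h := by
    unfold nsq
    rw [Finset.mul_sum, ← Finset.sum_add_distrib, ← Finset.sum_add_distrib]
    refine Finset.sum_congr rfl fun j _ => ?_
    rw [Complex.sq_norm, Complex.sq_norm, Complex.sq_norm, Complex.normSq_add,
      show ((starRingEnd ℂ) (h j) * x j).re = (x j * (starRingEnd ℂ) (h j)).re from by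
        rw [mul_comm]]
    ring
  -- real part of the inner product identity
  have hre_sum : ∑ a ∈ A, (((coef ε (Y a) (∑ i : ZMod d, c a i * x i) : ℝ) : ℂ) *
        (∑ i : ZMod d, c a i * x i) * (starRingEnd ℂ) (∑ j : ZMod d, c a j * h j)).re
      = -(L⁻¹ * nsq d g) - α * ∑ j : ZMod d, ((starRingEnd ℂ) (h j) * x j).re := by
    have h1 := congrArg Complex.re hG
    rw [hGval] at h1
    rw [Complex.ofReal_re, Complex.add_re, Complex.re_ofReal_mul, Complex.re_sum,
      Complex.re_sum] at h1
    linarith [h1]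
  -- split the summed RHS
  have hsplit : ∑ a ∈ A,
      ((Real.sqrt (‖∑ j : ZMod d, c a j * x j‖ ^ 2 + ε)
          - Real.sqrt (Y a + ε)) ^ 2
        + 2 * (((coef ε (Y a) (∑ i : ZMod d, c a i * x i) : ℝ) : ℂ) *
            (∑ i : ZMod d, c a i * x i) * (starRingEnd ℂ) (∑ j : ZMod d, c a j * h j)).re
        + ‖∑ j : ZMod d, c a j * h j‖ ^ 2)
      = (∑ a ∈ A, (Real.sqrt (‖∑ j : ZMod d, c a j * x j‖ ^ 2 + ε)
          - Real.sqrt (Y a + ε)) ^ 2)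
        + 2 * (∑ a ∈ A, (((coef ε (Y a) (∑ i : ZMod d, c a i * x i) : ℝ) : ℂ) *
            (∑ i : ZMod d, c a i * x i) * (starRingEnd ℂ) (∑ j : ZMod d, c a j * h j)).re)
        + ∑ a ∈ A, ‖∑ j : ZMod d, c a j * h j‖ ^ 2 := by
    rw [Finset.sum_add_distrib, Finset.sum_add_distrib, Finset.mul_sum]
  have hLLinv : L * (L⁻¹ ^ 2 * nsq d g) ≤ L⁻¹ * nsq d g := by
    rcases eq_or_ne L 0 with h0 | h0
    · simp [h0]
    · refine le_of_eq ?_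
      field_simp
  have hLh := hL h
  simp only [hxh]
  rw [hnsqadd, hnsqh]
  rw [hsplit] at step1s
  rw [hnsqh] at hLh
  linarith [step1s, hre_sum, hLh, hLLinv, nsq_nonneg d g]

lemma descent_z (d : ℕ) [NeZero d] (R : Finset (ZMod d))
    (y : ZMod d → ZMod d → ℝ) (hy : ∀ r ∈ R, ∀ k : ZMod d, 0 ≤ y r k)
    (ε αT : ℝ) (hε : 0 ≤ ε) (z v : ZMod d → ℂ) (L : ℝ) (hL0 : 0 ≤ L)
    (hLb : ∀ h : ZMod d → ℂ,
      (∑ r ∈ R, ∑ k : ZMod d,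
          ‖∑ j : ZMod d, (Fent d k j * v (j - r)) * h j‖ ^ 2)
        + αT * nsq d h ≤ L * nsq d h) :
    loss d R y ε (fun j => z j - (L⁻¹ : ℂ) * gradZJ d R y ε αT z v j) v
        + αT * nsq d (fun j => z j - (L⁻¹ : ℂ) * gradZJ d R y ε αT z v j)
      ≤ loss d R y ε z v + αT * nsq d z - L⁻¹ * nsq d (gradZJ d R y ε αT z v) := by
  have hQ : ∀ (r k : ZMod d) (z' : ZMod d → ℂ),
      Qform d r k z' v = ∑ i : ZMod d, (Fent d k i * v (i - r)) * z' i := by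
    intro r k z'
    exact Finset.sum_congr rfl fun i _ => by ring
  have hloss : ∀ z' : ZMod d → ℂ, loss d R y ε z' v
      = ∑ a ∈ R ×ˢ (Finset.univ : Finset (ZMod d)),
          (Real.sqrt (‖∑ j : ZMod d, (Fent d a.2 j * v (j - a.1)) * z' j‖ ^ 2 + ε)
            - Real.sqrt (y a.1 a.2 + ε)) ^ 2 := by
    intro z'
    unfold loss lossR
    rw [Finset.sum_product]
    exact Finset.sum_congr rfl fun r _ => Finset.sum_congr rfl fun k _ => by rw [hQ r k z']
  have key := descent_core d (R ×ˢ (Finset.univ : Finset (ZMod d)))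
    (fun a j => Fent d a.2 j * v (j - a.1)) (fun a => y a.1 a.2)
    (fun a ha => by
      rw [Finset.mem_product] at ha
      exact hy a.1 ha.1 a.2)
    ε αT L hε hL0
    (fun h => by
      rw [Finset.sum_product]
      exact hLb h)
    z (gradZJ d R y ε αT z v)
    (fun j => by
      unfold gradZJ gradZr
      rw [Finset.sum_product]
      congr 1
      refine Finset.sum_congr rfl fun r _ => Finset.sum_congr rfl fun k _ => ?_
      rw [hQ r k z])
  rw [hloss, hloss]
  exact key

lemma descent_v (d : ℕ) [NeZero d] (R : Finset (ZMod d))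
    (y : ZMod d → ZMod d → ℝ) (hy : ∀ r ∈ R, ∀ k : ZMod d, 0 ≤ y r k)
    (ε βT : ℝ) (hε : 0 ≤ ε) (z v : ZMod d → ℂ) (L : ℝ) (hL0 : 0 ≤ L)
    (hLb : ∀ h : ZMod d → ℂ,
      (∑ r ∈ R, ∑ k : ZMod d,
          ‖∑ j : ZMod d, (z (j + r) * Fent d k (j + r)) * h j‖ ^ 2)
        + βT * nsq d h ≤ L * nsq d h) :
    loss d R y ε z (fun j => v j - (L⁻¹ : ℂ) * gradVJ d R y ε βT z v j)
        + βT * nsq d (fun j => v j - (L⁻¹ : ℂ) * gradVJ d R y ε βT z v j)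
      ≤ loss d R y ε z v + βT * nsq d v - L⁻¹ * nsq d (gradVJ d R y ε βT z v) := by
  have hQ : ∀ (r k : ZMod d) (v' : ZMod d → ℂ),
      Qform d r k z v' = ∑ i : ZMod d, (z (i + r) * Fent d k (i + r)) * v' i := by
    intro r k v'
    exact (Fintype.sum_equiv (Equiv.addRight r)
      (fun i => (z (i + r) * Fent d k (i + r)) * v' i)
      (fun j => z j * Fent d k j * v' (j - r))
      (fun i => by simp only [Equiv.coe_addRight, add_sub_cancel_right])).symm
  have hloss : ∀ v' : ZMod d → ℂ, loss d R y ε z v'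
      = ∑ a ∈ R ×ˢ (Finset.univ : Finset (ZMod d)),
          (Real.sqrt (‖∑ j : ZMod d, (z (j + a.1) * Fent d a.2 (j + a.1)) * v' j‖ ^ 2 + ε)
            - Real.sqrt (y a.1 a.2 + ε)) ^ 2 := by
    intro v'
    unfold loss lossR
    rw [Finset.sum_product]
    exact Finset.sum_congr rfl fun r _ => Finset.sum_congr rfl fun k _ => by rw [hQ r k v']
  have key := descent_core d (R ×ˢ (Finset.univ : Finset (ZMod d)))
    (fun a j => z (j + a.1) * Fent d a.2 (j + a.1)) (fun a => y a.1 a.2)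
    (fun a ha => by
      rw [Finset.mem_product] at ha
      exact hy a.1 ha.1 a.2)
    ε βT L hε hL0
    (fun h => by
      rw [Finset.sum_product]
      exact hLb h)
    v (gradVJ d R y ε βT z v)
    (fun j => by
      unfold gradVJ gradVr
      rw [Finset.sum_product]
      congr 1
      refine Finset.sum_congr rfl fun r _ => Finset.sum_congr rfl fun k _ => ?_
      rw [hQ r k v, show Fent d k (j + r) * z (j + r) = z (j + r) * Fent d k (j + r) from
        mul_comm _ _])
  rw [hloss, hloss]
  exact key

/-- **One-variable descent with Lipschitz step sizes** (alternating-minimization step,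
Theorem 3.5 / version of Filbir–Melnyk): with `z₊ = z − L_v^{−1}∇_z J(z,v)` and
`v₊ = v − L_z^{−1}∇_v J(z,v)`, one has `L_v ≤ d‖v‖₂² + α_T`, `L_z ≤ d‖z‖₂² + β_T`,
`J(z₊,v) ≤ J(z,v) − L_v^{−1}‖∇_z J(z,v)‖₂²` and `J(z,v₊) ≤ J(z,v) − L_z^{−1}‖∇_v J(z,v)‖₂²`. -/
theorem one_variable_descent (d : ℕ) [NeZero d]
    (R : Finset (ZMod d)) (hR : R.Nonempty)
    (y : ZMod d → ZMod d → ℝ) (hy : ∀ r ∈ R, ∀ k : ZMod d, 0 ≤ y r k)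
    (ε αT βT : ℝ) (hε : 0 ≤ ε) (hαT : 0 ≤ αT) (hβT : 0 ≤ βT)
    (z v : ZMod d → ℂ) :
    Lv d R αT v ≤ d * nsq d v + αT ∧
    Lz d R βT z ≤ d * nsq d z + βT ∧
    Jfun d R y ε αT βT (fun j => z j - ((Lv d R αT v)⁻¹ : ℂ) * gradZJ d R y ε αT z v j) v
      ≤ Jfun d R y ε αT βT z v - (Lv d R αT v)⁻¹ * nsq d (gradZJ d R y ε αT z v) ∧
    Jfun d R y ε αT βT z (fun j => v j - ((Lz d R βT z)⁻¹ : ℂ) * gradVJ d R y ε βT z v j)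
      ≤ Jfun d R y ε αT βT z v - (Lz d R βT z)⁻¹ * nsq d (gradVJ d R y ε βT z v) := by
  classical
  set Mv : ℝ := Finset.univ.sup' ⟨(0 : ZMod d), Finset.mem_univ 0⟩
    (fun j => ∑ r ∈ R, ‖v (j - r)‖ ^ 2) with hMvdef
  set Mz : ℝ := Finset.univ.sup' ⟨(0 : ZMod d), Finset.mem_univ 0⟩
    (fun j => ∑ r ∈ R, ‖z (j + r)‖ ^ 2) with hMzdef
  have hLvEq : Lv d R αT v = d * Mv + αT := rfl
  have hjv : ∀ j : ZMod d, (∑ r ∈ R, ‖v (j - r)‖ ^ 2) ≤ Mv := by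
    intro j
    rw [hMvdef]
    exact Finset.le_sup' (fun j => ∑ r ∈ R, ‖v (j - r)‖ ^ 2) (Finset.mem_univ j)
  have hjz : ∀ j : ZMod d, (∑ r ∈ R, ‖z (j + r)‖ ^ 2) ≤ Mz := by
    intro j
    rw [hMzdef]
    exact Finset.le_sup' (fun j => ∑ r ∈ R, ‖z (j + r)‖ ^ 2) (Finset.mem_univ j)
  have hLzEq : Lz d R βT z = d * Mz + βT := rfl
  have hMvle : Mv ≤ nsq d v := by
    rw [hMvdef]
    refine Finset.sup'_le _ _ fun j _ => ?_
    calc ∑ r ∈ R, ‖v (j - r)‖ ^ 2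
        ≤ ∑ r : ZMod d, ‖v (j - r)‖ ^ 2 :=
          Finset.sum_le_sum_of_subset_of_nonneg (Finset.subset_univ R)
            (fun _ _ _ => by positivity)
      _ = nsq d v := Fintype.sum_equiv (Equiv.subLeft j) _ _
          (fun r => by simp only [Equiv.subLeft_apply])
  have hMzle : Mz ≤ nsq d z := by
    rw [hMzdef]
    refine Finset.sup'_le _ _ fun j _ => ?_
    calc ∑ r ∈ R, ‖z (j + r)‖ ^ 2
        ≤ ∑ r : ZMod d, ‖z (j + r)‖ ^ 2 :=
          Finset.sum_le_sum_of_subset_of_nonneg (Finset.subset_univ R)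
            (fun _ _ _ => by positivity)
      _ = nsq d z := Fintype.sum_equiv (Equiv.addLeft j) _ _
          (fun r => by simp only [Equiv.coe_addLeft])
  have hMv0 : 0 ≤ Mv :=
    le_trans (show (0:ℝ) ≤ ∑ r ∈ R, ‖v ((0 : ZMod d) - r)‖ ^ 2 by positivity)
      (hjv 0)
  have hMz0 : 0 ≤ Mz :=
    le_trans (show (0:ℝ) ≤ ∑ r ∈ R, ‖z ((0 : ZMod d) + r)‖ ^ 2 by positivity)
      (hjz 0)
  have hLv0 : 0 ≤ Lv d R αT v := by
    rw [hLvEq]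
    have : (0:ℝ) ≤ (d : ℝ) := Nat.cast_nonneg d
    nlinarith
  have hLz0 : 0 ≤ Lz d R βT z := by
    rw [hLzEq]
    have : (0:ℝ) ≤ (d : ℝ) := Nat.cast_nonneg d
    nlinarith
  have part1 : Lv d R αT v ≤ d * nsq d v + αT := by
    rw [hLvEq]
    exact add_le_add_left (mul_le_mul_of_nonneg_left hMvle (Nat.cast_nonneg d)) αT
  have part2 : Lz d R βT z ≤ d * nsq d z + βT := by
    rw [hLzEq]
    exact add_le_add_left (mul_le_mul_of_nonneg_left hMzle (Nat.cast_nonneg d)) βT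
  -- Lipschitz bound (z side)
  have hLbz : ∀ h : ZMod d → ℂ,
      (∑ r ∈ R, ∑ k : ZMod d,
          ‖∑ j : ZMod d, (Fent d k j * v (j - r)) * h j‖ ^ 2)
        + αT * nsq d h ≤ Lv d R αT v * nsq d h := by
    intro h
    have h1 : ∀ r : ZMod d,
        ∑ k : ZMod d, ‖∑ j : ZMod d, (Fent d k j * v (j - r)) * h j‖ ^ 2
          = (d : ℝ) * ∑ j : ZMod d, ‖v (j - r)‖ ^ 2 * ‖h j‖ ^ 2 := by
      intro r
      calc ∑ k : ZMod d, ‖∑ j : ZMod d, (Fent d k j * v (j - r)) * h j‖ ^ 2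
          = ∑ k : ZMod d, ‖∑ j : ZMod d, Fent d k j * (v (j - r) * h j)‖ ^ 2 := by
            refine Finset.sum_congr rfl fun k _ => ?_
            rw [show (∑ j : ZMod d, (Fent d k j * v (j - r)) * h j)
                = ∑ j : ZMod d, Fent d k j * (v (j - r) * h j) from
              Finset.sum_congr rfl fun j _ => by ring]
        _ = (d : ℝ) * ∑ j : ZMod d, ‖v (j - r) * h j‖ ^ 2 := parseval d _
        _ = (d : ℝ) * ∑ j : ZMod d, ‖v (j - r)‖ ^ 2 * ‖h j‖ ^ 2 := by
            congr 1
            exact Finset.sum_congr rfl fun j _ => by rw [norm_mul, mul_pow]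
    rw [Finset.sum_congr rfl fun r _ => h1 r]
    have h2 : ∑ r ∈ R, (d : ℝ) * ∑ j : ZMod d,
          ‖v (j - r)‖ ^ 2 * ‖h j‖ ^ 2
        ≤ ((d : ℝ) * Mv) * nsq d h := by
      rw [← Finset.mul_sum, Finset.sum_comm, mul_assoc]
      refine mul_le_mul_of_nonneg_left ?_ (Nat.cast_nonneg d)
      calc ∑ j : ZMod d, ∑ r ∈ R, ‖v (j - r)‖ ^ 2 * ‖h j‖ ^ 2
          = ∑ j : ZMod d, (∑ r ∈ R, ‖v (j - r)‖ ^ 2) * ‖h j‖ ^ 2 :=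
            Finset.sum_congr rfl fun j _ => (Finset.sum_mul _ _ _).symm
        _ ≤ ∑ j : ZMod d, Mv * ‖h j‖ ^ 2 :=
            Finset.sum_le_sum fun j _ => mul_le_mul_of_nonneg_right (hjv j) (by positivity)
        _ = Mv * nsq d h := (Finset.mul_sum _ _ _).symm
    rw [hLvEq, add_mul]
    linarith [h2]
  -- Lipschitz bound (v side)
  have hLbv : ∀ h : ZMod d → ℂ,
      (∑ r ∈ R, ∑ k : ZMod d,
          ‖∑ j : ZMod d, (z (j + r) * Fent d k (j + r)) * h j‖ ^ 2)
        + βT * nsq d h ≤ Lz d R βT z * nsq d h := by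
    intro h
    have h1 : ∀ r : ZMod d,
        ∑ k : ZMod d, ‖∑ j : ZMod d, (z (j + r) * Fent d k (j + r)) * h j‖ ^ 2
          = (d : ℝ) * ∑ j : ZMod d, ‖z (j + r)‖ ^ 2 * ‖h j‖ ^ 2 := by
      intro r
      calc ∑ k : ZMod d, ‖∑ j : ZMod d, (z (j + r) * Fent d k (j + r)) * h j‖ ^ 2
          = ∑ k : ZMod d, ‖∑ i : ZMod d, Fent d k i * (z i * h (i - r))‖ ^ 2 := by
            refine Finset.sum_congr rfl fun k _ => ?_
            rw [show (∑ j : ZMod d, (z (j + r) * Fent d k (j + r)) * h j)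
                = ∑ i : ZMod d, Fent d k i * (z i * h (i - r)) from
              Fintype.sum_equiv (Equiv.addRight r) _ _
                (fun j => by
                  simp only [Equiv.coe_addRight, add_sub_cancel_right]
                  ring)]
        _ = (d : ℝ) * ∑ i : ZMod d, ‖z i * h (i - r)‖ ^ 2 := parseval d _
        _ = (d : ℝ) * ∑ j : ZMod d, ‖z (j + r)‖ ^ 2 * ‖h j‖ ^ 2 := by
            congr 1
            exact (Fintype.sum_equiv (Equiv.addRight r)
              (fun j => ‖z (j + r)‖ ^ 2 * ‖h j‖ ^ 2)
              (fun i => ‖z i * h (i - r)‖ ^ 2)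
              (fun j => by
                simp only [Equiv.coe_addRight, add_sub_cancel_right, norm_mul, mul_pow])).symm
    rw [Finset.sum_congr rfl fun r _ => h1 r]
    have h2 : ∑ r ∈ R, (d : ℝ) * ∑ j : ZMod d,
          ‖z (j + r)‖ ^ 2 * ‖h j‖ ^ 2
        ≤ ((d : ℝ) * Mz) * nsq d h := by
      rw [← Finset.mul_sum, Finset.sum_comm, mul_assoc]
      refine mul_le_mul_of_nonneg_left ?_ (Nat.cast_nonneg d)
      calc ∑ j : ZMod d, ∑ r ∈ R, ‖z (j + r)‖ ^ 2 * ‖h j‖ ^ 2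
          = ∑ j : ZMod d, (∑ r ∈ R, ‖z (j + r)‖ ^ 2) * ‖h j‖ ^ 2 :=
            Finset.sum_congr rfl fun j _ => (Finset.sum_mul _ _ _).symm
        _ ≤ ∑ j : ZMod d, Mz * ‖h j‖ ^ 2 :=
            Finset.sum_le_sum fun j _ => mul_le_mul_of_nonneg_right (hjz j) (by positivity)
        _ = Mz * nsq d h := (Finset.mul_sum _ _ _).symm
    rw [hLzEq, add_mul]
    linarith [h2]
  have hz := descent_z d R y hy ε αT hε z v (Lv d R αT v) hLv0 hLbz
  have hv := descent_v d R y hy ε βT hε z v (Lz d R βT z) hLz0 hLbv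
  refine ⟨part1, part2, ?_, ?_⟩
  · simp only [Jfun]
    linarith [hz]
  · simp only [Jfun]
    linarith [hv]


end Ptycho
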